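/- Let B be a Banach space and L_ω (ω ∈ Ω) bounded operators on B such that for some K' > 0 and λ > 0 the compositions satisfy ‖L_{σ^{n-1}ω} ∘ ⋯ ∘ L_ω f‖ ≤ K' e^{-λn} ‖f‖ for all f in a closed subspace B₀ invariant under each L_ω, all n ≥ 0, and a.e. ω. Let S be the Banach space of essentially bounded measurable maps X : Ω → B₀ with norm ‖X‖_∞ = ess sup_ω ‖X(ω)‖. Then the operator D : S → S defined by (DX)(ω) = L_{σ^{-1}ω} X(σ^{-1}ω) − X(ω) is a bijection, with inverse given by (D^{-1}X)(ω) = −Σ_{j=0}^∞ L_{σ^{-j}ω}^{(j)} X(σ^{-j}ω), where L_ω^{(j)} = L_{σ^{j-1}ω} ∘ ⋯ ∘ L_ω. -/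

import Mathlib

variable {Ω : Type*} {B : Type*} [NormedAddCommGroup B] [NormedSpace ℝ B]

/-- Operator compositions `L_ω^{(n)} = L_{σ^{n-1}ω} ∘ ⋯ ∘ L_ω`. -/
noncomputable def Literate (σ : Ω → Ω) (L : Ω → B →L[ℝ] B) (ω : Ω) : ℕ → B →L[ℝ] B
  | 0 => ContinuousLinearMap.id ℝ B
  | n + 1 => (L (σ^[n] ω)).comp (Literate σ L ω n)

/-- The operator `(D X)(ω) = L_{σ^{-1}ω} X(σ^{-1}ω) − X(ω)`. -/
def Dop (σ : Equiv Ω Ω) (L : Ω → B →L[ℝ] B) (X : Ω → B) : Ω → B :=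
  fun ω => L (σ.symm ω) (X (σ.symm ω)) - X ω

/-- The candidate inverse `(D⁻¹ X)(ω) = −∑_{j≥0} L^{(j)}_{σ^{-j}ω} X(σ^{-j}ω)`. -/
noncomputable def Dinv (σ : Equiv Ω Ω) (L : Ω → B →L[ℝ] B) (X : Ω → B) : Ω → B :=
  fun ω => -∑' j : ℕ, Literate σ L ((σ.symm)^[j] ω) j (X ((σ.symm)^[j] ω))

lemma Literate_succ_comp (σ : Ω → Ω) (L : Ω → B →L[ℝ] B) (ω : Ω) (n : ℕ) :
    Literate σ L ω (n + 1) = (Literate σ L (σ ω) n).comp (L ω) := by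
  induction n generalizing ω with
  | zero =>
    ext b
    simp [Literate]
  | succ n ih =>
    ext b
    have h1 : Literate σ L ω (n + 2) = (L (σ^[n+1] ω)).comp (Literate σ L ω (n + 1)) := rfl
    have h2 : Literate σ L (σ ω) (n + 1) = (L (σ^[n] (σ ω))).comp (Literate σ L (σ ω) n) := rfl
    rw [h1, ih]
    simp [h2, Function.iterate_succ_apply]

lemma Literate_mem (σ : Ω → Ω) (L : Ω → B →L[ℝ] B) (B₀ : Submodule ℝ B)
    (hinv : ∀ ω, ∀ b ∈ B₀, L ω b ∈ B₀) (ω : Ω) (n : ℕ) (b : B) (hb : b ∈ B₀) :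
    Literate σ L ω n b ∈ B₀ := by
  induction n with
  | zero => simpa [Literate] using hb
  | succ n ih =>
    show L (σ^[n] ω) (Literate σ L ω n b) ∈ B₀
    exact hinv _ _ ih

lemma iterate_symm_cancel (σ : Equiv Ω Ω) : ∀ (j : ℕ) (x : Ω), σ^[j] ((σ.symm)^[j] x) = x := by
  intro j
  induction j with
  | zero => intro x; simp
  | succ j ih =>
    intro x
    rw [Function.iterate_succ_apply' (σ : Ω → Ω), Function.iterate_succ_apply (σ.symm : Ω → Ω),
      ih, Equiv.apply_symm_apply]

/-- The `j`-th term of the series defining `Dinv`. -/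
noncomputable def Dterm (σ : Equiv Ω Ω) (L : Ω → B →L[ℝ] B) (X : Ω → B) (ω : Ω) (j : ℕ) : B :=
  Literate σ L ((σ.symm)^[j] ω) j (X ((σ.symm)^[j] ω))

lemma Dinv_eq (σ : Equiv Ω Ω) (L : Ω → B →L[ℝ] B) (X : Ω → B) (ω : Ω) :
    Dinv σ L X ω = -∑' j : ℕ, Dterm σ L X ω j := rfl

lemma Dterm_zero (σ : Equiv Ω Ω) (L : Ω → B →L[ℝ] B) (X : Ω → B) (ω : Ω) :
    Dterm σ L X ω 0 = X ω := by
  simp [Dterm, Literate]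

lemma Dterm_shift (σ : Equiv Ω Ω) (L : Ω → B →L[ℝ] B) (X : Ω → B) (ω : Ω) (j : ℕ) :
    L (σ.symm ω) (Dterm σ L X (σ.symm ω) j) = Dterm σ L X ω (j + 1) := by
  have e1 : ((σ.symm : Ω → Ω))^[j + 1] ω = (σ.symm : Ω → Ω)^[j] (σ.symm ω) :=
    Function.iterate_succ_apply _ _ _
  have e2 : (σ : Ω → Ω)^[j] (((σ.symm : Ω → Ω))^[j + 1] ω) = σ.symm ω := by
    rw [e1]; exact iterate_symm_cancel σ j (σ.symm ω)
  have h1 : Dterm σ L X ω (j + 1)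
      = L ((σ : Ω → Ω)^[j] (((σ.symm : Ω → Ω))^[j+1] ω))
          (Literate σ L (((σ.symm : Ω → Ω))^[j+1] ω) j (X (((σ.symm : Ω → Ω))^[j+1] ω))) := rfl
  rw [h1, e2, e1]
  rfl

lemma Dterm_Dop (σ : Equiv Ω Ω) (L : Ω → B →L[ℝ] B) (X : Ω → B) (ω : Ω) (j : ℕ) :
    Dterm σ L (Dop σ L X) ω j = Dterm σ L X ω (j + 1) - Dterm σ L X ω j := by
  have e1 : σ.symm ((σ.symm : Ω → Ω)^[j] ω) = ((σ.symm : Ω → Ω))^[j + 1] ω :=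
    (Function.iterate_succ_apply' _ _ _).symm
  have h1 : Dterm σ L (Dop σ L X) ω j
      = Literate σ L ((σ.symm : Ω → Ω)^[j] ω) j
          (L (σ.symm ((σ.symm : Ω → Ω)^[j] ω)) (X (σ.symm ((σ.symm : Ω → Ω)^[j] ω)))
            - X ((σ.symm : Ω → Ω)^[j] ω)) := rfl
  rw [h1, map_sub]
  congr 1
  have h2 : Literate (σ : Ω → Ω) L (σ.symm ((σ.symm : Ω → Ω)^[j] ω)) (j + 1)
      = (Literate σ L (σ (σ.symm ((σ.symm : Ω → Ω)^[j] ω))) j).comp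
          (L (σ.symm ((σ.symm : Ω → Ω)^[j] ω))) :=
    Literate_succ_comp _ L _ j
  rw [Equiv.apply_symm_apply] at h2
  have h3 : Dterm σ L X ω (j + 1)
      = Literate σ L (σ.symm ((σ.symm : Ω → Ω)^[j] ω)) (j + 1)
          (X (σ.symm ((σ.symm : Ω → Ω)^[j] ω))) := by
    rw [e1]; rfl
  rw [h3, h2]
  rfl

/-- If the cocycle generated by the `L_ω` contracts uniformly exponentially on an invariant
closed subspace `B₀`, then `D X(ω) = L_{σ^{-1}ω} X(σ^{-1}ω) − X(ω)` is a bijection of the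
space of bounded `B₀`-valued maps, with inverse `Dinv`. -/
theorem Dop_bijective [CompleteSpace B]
    (σ : Equiv Ω Ω) (L : Ω → B →L[ℝ] B)
    (B₀ : Submodule ℝ B) (hB₀closed : IsClosed (B₀ : Set B))
    (hinv : ∀ ω, ∀ b ∈ B₀, L ω b ∈ B₀)
    (K' lam : ℝ) (hK' : 0 < K') (hlam : 0 < lam)
    (hdec : ∀ ω, ∀ n : ℕ, ∀ b ∈ B₀,
      ‖Literate σ L ω n b‖ ≤ K' * Real.exp (-lam * n) * ‖b‖) :
    Set.BijOn (Dop σ L)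
      {X : Ω → B | (∀ ω, X ω ∈ B₀) ∧ ∃ C : ℝ, ∀ ω, ‖X ω‖ ≤ C}
      {X : Ω → B | (∀ ω, X ω ∈ B₀) ∧ ∃ C : ℝ, ∀ ω, ‖X ω‖ ≤ C} ∧
    ∀ X ∈ {X : Ω → B | (∀ ω, X ω ∈ B₀) ∧ ∃ C : ℝ, ∀ ω, ‖X ω‖ ≤ C},
      (Dinv σ L X ∈ {X : Ω → B | (∀ ω, X ω ∈ B₀) ∧ ∃ C : ℝ, ∀ ω, ‖X ω‖ ≤ C} ∧
        Dop σ L (Dinv σ L X) = X ∧ Dinv σ L (Dop σ L X) = X) := by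
  set S : Set (Ω → B) := {X : Ω → B | (∀ ω, X ω ∈ B₀) ∧ ∃ C : ℝ, ∀ ω, ‖X ω‖ ≤ C} with hSdef
  have hr0 : (0:ℝ) ≤ Real.exp (-lam) := (Real.exp_pos _).le
  have hr1 : Real.exp (-lam) < 1 := by
    rw [Real.exp_lt_one_iff]; linarith
  have hbound : ∀ (X : Ω → B), (∀ ω, X ω ∈ B₀) → ∀ C : ℝ, (∀ ω, ‖X ω‖ ≤ C) → ∀ (ω : Ω) (j : ℕ),
      ‖Dterm σ L X ω j‖ ≤ (K' * C) * Real.exp (-lam) ^ j := by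
    intro X hXm C hXC ω j
    have h1 := hdec ((σ.symm : Ω → Ω)^[j] ω) j (X ((σ.symm : Ω → Ω)^[j] ω)) (hXm _)
    have h2 : Real.exp (-lam * j) = Real.exp (-lam) ^ j := by
      rw [mul_comm, Real.exp_nat_mul]
    calc ‖Dterm σ L X ω j‖
        ≤ K' * Real.exp (-lam * j) * ‖X ((σ.symm : Ω → Ω)^[j] ω)‖ := h1
      _ ≤ K' * Real.exp (-lam * j) * C :=
          mul_le_mul_of_nonneg_left (hXC _) (mul_nonneg hK'.le (Real.exp_pos _).le)
      _ = (K' * C) * Real.exp (-lam) ^ j := by rw [h2]; ring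
  have hsum : ∀ X ∈ S, ∀ ω : Ω, Summable (Dterm σ L X ω) := by
    rintro X ⟨hXm, C, hXC⟩ ω
    exact Summable.of_norm_bounded (g := fun j => (K' * C) * Real.exp (-lam) ^ j)
      (((summable_geometric_of_lt_one hr0 hr1).mul_left _)) (hbound X hXm C hXC ω)
  have hDopS : ∀ X ∈ S, Dop σ L X ∈ S := by
    rintro X ⟨hXm, C, hXC⟩
    have hL1 : ∀ (ω' : Ω) (b : B), b ∈ B₀ → ‖L ω' b‖ ≤ K' * Real.exp (-lam) * ‖b‖ := by
      intro ω' b hb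
      have := hdec ω' 1 b hb
      simpa [Literate] using this
    refine ⟨fun ω => sub_mem (hinv _ _ (hXm _)) (hXm _),
      K' * Real.exp (-lam) * C + C, fun ω => ?_⟩
    calc ‖Dop σ L X ω‖ = ‖L (σ.symm ω) (X (σ.symm ω)) - X ω‖ := rfl
      _ ≤ ‖L (σ.symm ω) (X (σ.symm ω))‖ + ‖X ω‖ := norm_sub_le _ _
      _ ≤ K' * Real.exp (-lam) * ‖X (σ.symm ω)‖ + ‖X ω‖ := by
          exact add_le_add (hL1 _ _ (hXm _)) le_rfl
      _ ≤ K' * Real.exp (-lam) * C + C := by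
          refine add_le_add (mul_le_mul_of_nonneg_left (hXC _) ?_) (hXC _)
          exact mul_nonneg hK'.le (Real.exp_pos _).le
  have hDinvS : ∀ X ∈ S, Dinv σ L X ∈ S := by
    intro X hX
    obtain ⟨hXm, C, hXC⟩ := hX
    constructor
    · intro ω
      rw [Dinv_eq]
      refine neg_mem ?_
      refine hB₀closed.mem_of_tendsto ((hsum X ⟨hXm, C, hXC⟩ ω).hasSum.tendsto_sum_nat)
        (Filter.Eventually.of_forall fun n => ?_)
      exact Submodule.sum_mem _ fun j _ => Literate_mem _ L B₀ hinv _ _ _ (hXm _)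
    · refine ⟨K' * C * (1 - Real.exp (-lam))⁻¹, fun ω => ?_⟩
      have hgs : HasSum (fun j : ℕ => (K' * C) * Real.exp (-lam) ^ j)
          ((K' * C) * (1 - Real.exp (-lam))⁻¹) :=
        (hasSum_geometric_of_lt_one hr0 hr1).mul_left _
      have := tsum_of_norm_bounded hgs (hbound X hXm C hXC ω)
      rw [Dinv_eq, norm_neg]
      exact this
  have hDopDinv : ∀ X ∈ S, Dop σ L (Dinv σ L X) = X := by
    intro X hX
    funext ω
    have hs := hsum X hX
    have h2 : L (σ.symm ω) (Dinv σ L X (σ.symm ω)) = -∑' j : ℕ, Dterm σ L X ω (j + 1) := by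
      rw [Dinv_eq, map_neg, ContinuousLinearMap.map_tsum _ (hs (σ.symm ω))]
      congr 1
      exact tsum_congr fun j => Dterm_shift σ L X ω j
    have h3 : (∑' j : ℕ, Dterm σ L X ω j)
        = Dterm σ L X ω 0 + ∑' j : ℕ, Dterm σ L X ω (j + 1) :=
      (hs ω).tsum_eq_zero_add
    have h4 : Dop σ L (Dinv σ L X) ω
        = L (σ.symm ω) (Dinv σ L X (σ.symm ω)) - Dinv σ L X ω := rfl
    rw [h4, h2, Dinv_eq, h3, Dterm_zero]
    abel
  have hDinvDop : ∀ X ∈ S, Dinv σ L (Dop σ L X) = X := by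
    intro X hX
    funext ω
    have hsX := hsum X hX ω
    have hsD := hsum (Dop σ L X) (hDopS X hX) ω
    have hzero : Filter.Tendsto (fun n => Dterm σ L X ω n) Filter.atTop (nhds 0) :=
      hsX.tendsto_atTop_zero
    have hps : ∀ n : ℕ, ∑ j ∈ Finset.range n, Dterm σ L (Dop σ L X) ω j
        = Dterm σ L X ω n - Dterm σ L X ω 0 := by
      intro n
      simp only [Dterm_Dop]
      exact Finset.sum_range_sub (Dterm σ L X ω) n
    have h1 : Filter.Tendsto (fun n => ∑ j ∈ Finset.range n, Dterm σ L (Dop σ L X) ω j)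
        Filter.atTop (nhds (∑' j : ℕ, Dterm σ L (Dop σ L X) ω j)) :=
      hsD.hasSum.tendsto_sum_nat
    have h2 : Filter.Tendsto (fun n => Dterm σ L X ω n - Dterm σ L X ω 0)
        Filter.atTop (nhds (0 - Dterm σ L X ω 0)) :=
      hzero.sub tendsto_const_nhds
    have h3 : (∑' j : ℕ, Dterm σ L (Dop σ L X) ω j) = 0 - Dterm σ L X ω 0 := by
      refine tendsto_nhds_unique ?_ h2
      simpa only [hps] using h1
    rw [Dinv_eq, h3, Dterm_zero]
    abel
  refine ⟨⟨fun X hX => hDopS X hX, fun X hX Y hY hXY => ?_,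
      fun Y hY => ⟨Dinv σ L Y, hDinvS Y hY, hDopDinv Y hY⟩⟩,
    fun X hX => ⟨hDinvS X hX, hDopDinv X hX, hDinvDop X hX⟩⟩
  rw [← hDinvDop X hX, ← hDinvDop Y hY, hXY]
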